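/- Let u ≥ v ≥ 2 be integers, M = [[a,b],[c,d]] ∈ SL₂(ℕ₀) with a ≥ c, and n a natural number. Suppose M' = W·M where W is a product of exactly 2n+1 matrices each equal to L_u or R_v, and write M' = [[a',b'],[c',d']]. Then max{a', c'} ≤ γ_n and a' + c' ≤ α_n + γ_n, where α_n and γ_n are defined from the initial values a and c. -/
import Mathlib
set_option maxHeartbeats 1000000


open Matrix Finset

def Lm (u : ℕ) : Matrix (Fin 2) (Fin 2) ℕ := !![1, 0; u, 1]
def Rm (v : ℕ) : Matrix (Fin 2) (Fin 2) ℕ := !![1, v; 0, 1]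

/-- The product of the matrices corresponding to a word: `false ↦ L_u`, `true ↦ R_v`. -/
def wordProd (u v : ℕ) (w : List Bool) : Matrix (Fin 2) (Fin 2) ℕ :=
  (w.map (fun b => if b then Rm v else Lm u)).prod

/-- μ of a matrix: maximum of the four entries. -/
def matMax (M : Matrix (Fin 2) (Fin 2) ℕ) : ℕ :=
  max (max (M 0 0) (M 0 1)) (max (M 1 0) (M 1 1))

/-- μ(𝒯^{(u,v)}(I₂;n)): maximum of μ over all products of exactly n matrices each L_u or R_v. -/
def levelMax (u v n : ℕ) : ℕ :=
  Finset.univ.sup (fun w : Fin n → Bool => matMax (wordProd u v (List.ofFn w)))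
/-- The pair (α_n, γ_n) defined by α_0 = a, γ_0 = u·a + c, and
    α_n = α_{n-1} + v·γ_{n-1}, γ_n = u·α_{n-1} + (1+uv)·γ_{n-1}. -/
def ag (u v a c : ℕ) : ℕ → ℕ × ℕ
  | 0 => (a, u * a + c)
  | n + 1 =>
      ((ag u v a c n).1 + v * (ag u v a c n).2,
       u * (ag u v a c n).1 + (1 + u * v) * (ag u v a c n).2)

/-- Membership in SL₂(ℕ₀): natural-number entries with determinant 1. -/
def detOne (M : Matrix (Fin 2) (Fin 2) ℕ) : Prop :=
  M 0 0 * M 1 1 = M 0 1 * M 1 0 + 1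

/-! ### Auxiliary machinery -/

/-- One step of the action on the first column: `false` is `L_u`, `true` is `R_v`. -/
def sstep (u v : ℕ) : Bool → ℕ × ℕ → ℕ × ℕ
  | true, p => (p.1 + v * p.2, p.2)
  | false, p => (p.1, u * p.1 + p.2)

/-- The action of a word on a column vector; the head of the list acts last. -/
def sact (u v : ℕ) (w : List Bool) (p : ℕ × ℕ) : ℕ × ℕ := w.foldr (sstep u v) p

/-- Alternating word of length `m` starting with letter `b` (applied first). -/
def salt (u v : ℕ) : Bool → ℕ → ℕ × ℕ → ℕ × ℕ
  | _, 0, p => p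
  | b, m + 1, p => salt u v (!b) m (sstep u v b p)

lemma salt_false_succ (u v : ℕ) (m : ℕ) (p : ℕ × ℕ) :
    salt u v false (m + 1) p = salt u v true m (sstep u v false p) := rfl

lemma salt_true_succ (u v : ℕ) (m : ℕ) (p : ℕ × ℕ) :
    salt u v true (m + 1) p = salt u v false m (sstep u v true p) := rfl

/-- The two-relation comparison machine. -/
lemma sMN (u v : ℕ) (hv : 2 ≤ v) (huv : v ≤ u) : ∀ m : ℕ,
    (∀ p q : ℕ × ℕ, p.1 ≤ q.2 → p.2 ≤ q.1 → u * p.1 ≤ v * q.2 →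
      max (salt u v false m p).1 (salt u v false m p).2 ≤
        max (salt u v true m q).1 (salt u v true m q).2 ∧
      (salt u v false m p).1 + (salt u v false m p).2 ≤
        (salt u v true m q).1 + (salt u v true m q).2) ∧
    (∀ p q : ℕ × ℕ, p.1 ≤ q.2 → p.2 ≤ q.1 → v * p.2 ≤ u * q.1 → u * p.1 ≤ v * q.2 →
      max (salt u v true m p).1 (salt u v true m p).2 ≤
        max (salt u v false m q).1 (salt u v false m q).2 ∧
      (salt u v true m p).1 + (salt u v true m p).2 ≤
        (salt u v false m q).1 + (salt u v false m q).2) := by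
  intro m
  induction m with
  | zero =>
      constructor
      · intro p q h1 h2 _
        constructor
        · show max p.1 p.2 ≤ max q.1 q.2
          exact max_le (h1.trans (le_max_right _ _)) (h2.trans (le_max_left _ _))
        · show p.1 + p.2 ≤ q.1 + q.2
          omega
      · intro p q h1 h2 _ _
        constructor
        · show max p.1 p.2 ≤ max q.1 q.2
          exact max_le (h1.trans (le_max_right _ _)) (h2.trans (le_max_left _ _))
        · show p.1 + p.2 ≤ q.1 + q.2
          omega
  | succ m ih =>
      obtain ⟨IH1, IH2⟩ := ih
      constructor
      · intro p q h1 h2 h3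
        rw [salt_false_succ, salt_true_succ]
        apply IH2 (sstep u v false p) (sstep u v true q)
        · show p.1 ≤ q.2
          exact h1
        · show u * p.1 + p.2 ≤ q.1 + v * q.2
          linarith
        · show v * (u * p.1 + p.2) ≤ u * (q.1 + v * q.2)
          have t1 : v * (u * p.1) ≤ v * (v * q.2) := Nat.mul_le_mul_left v h3
          have t2 : v * (v * q.2) ≤ u * (v * q.2) := Nat.mul_le_mul_right _ huv
          have t3 : v * p.2 ≤ v * q.1 := Nat.mul_le_mul_left v h2
          have t4 : v * q.1 ≤ u * q.1 := Nat.mul_le_mul_right _ huv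
          nlinarith [t1, t2, t3, t4]
        · show u * p.1 ≤ v * q.2
          exact h3
      · intro p q h1 h2 h3 h4
        rw [salt_false_succ, salt_true_succ]
        apply IH1 (sstep u v true p) (sstep u v false q)
        · show p.1 + v * p.2 ≤ u * q.1 + q.2
          linarith
        · show p.2 ≤ q.1
          exact h2
        · show u * (p.1 + v * p.2) ≤ v * (u * q.1 + q.2)
          have t1 : u * (v * p.2) ≤ u * (v * q.1) :=
            Nat.mul_le_mul_left u (Nat.mul_le_mul_left v h2)
          nlinarith [h4, t1]
  
/-- Starting with a wasted `L` is dominated by starting with `R`. -/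
lemma sLA (u v : ℕ) (hv : 2 ≤ v) (huv : v ≤ u) (m : ℕ) (p : ℕ × ℕ) (h : u * p.1 ≤ p.2) :
    max (salt u v false m p).1 (salt u v false m p).2 ≤
      max (salt u v true m p).1 (salt u v true m p).2 ∧
    (salt u v false m p).1 + (salt u v false m p).2 ≤
      (salt u v true m p).1 + (salt u v true m p).2 := by
  have h2u : 2 ≤ u := hv.trans huv
  cases m with
  | zero => exact ⟨le_rfl, le_rfl⟩
  | succ m =>
      rw [salt_false_succ, salt_true_succ]
      apply (sMN u v hv huv m).2 (sstep u v false p) (sstep u v true p)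
      · show p.1 ≤ p.2
        nlinarith [h, Nat.mul_le_mul_right p.1 h2u]
      · show u * p.1 + p.2 ≤ p.1 + v * p.2
        nlinarith [h, Nat.mul_le_mul_right p.2 hv]
      · show v * (u * p.1 + p.2) ≤ u * (p.1 + v * p.2)
        have t1 : v * (u * p.1) ≤ v * p.2 := Nat.mul_le_mul_left v h
        have t2 : 2 * (v * p.2) ≤ u * (v * p.2) := Nat.mul_le_mul_right _ h2u
        nlinarith [t1, t2]
      · show u * p.1 ≤ v * p.2
        nlinarith [h, Nat.mul_le_mul_right p.2 hv]

/-- Starting with a wasted `R` is dominated by starting with `L`. -/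
lemma sLB (u v : ℕ) (hv : 2 ≤ v) (huv : v ≤ u) (m : ℕ) (p : ℕ × ℕ) (h : v * p.2 ≤ p.1) :
    max (salt u v true m p).1 (salt u v true m p).2 ≤
      max (salt u v false m p).1 (salt u v false m p).2 ∧
    (salt u v true m p).1 + (salt u v true m p).2 ≤
      (salt u v false m p).1 + (salt u v false m p).2 := by
  have h2u : 2 ≤ u := hv.trans huv
  cases m with
  | zero => exact ⟨le_rfl, le_rfl⟩
  | succ m =>
      rw [salt_false_succ, salt_true_succ]
      apply (sMN u v hv huv m).1 (sstep u v true p) (sstep u v false p)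
      · show p.1 + v * p.2 ≤ u * p.1 + p.2
        nlinarith [h, Nat.mul_le_mul_right p.1 h2u]
      · show p.2 ≤ p.1
        nlinarith [h, Nat.mul_le_mul_right p.2 hv]
      · show u * (p.1 + v * p.2) ≤ v * (u * p.1 + p.2)
        have t1 : u * (v * p.2) ≤ u * p.1 := Nat.mul_le_mul_left u h
        have t2 : 2 * (u * p.1) ≤ v * (u * p.1) := Nat.mul_le_mul_right _ hv
        nlinarith [t1, t2]

/-- Main domination: any word is dominated by one of the two alternating words. -/
lemma sbound (u v : ℕ) (hv : 2 ≤ v) (huv : v ≤ u) (w : List Bool) (p : ℕ × ℕ) :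
    max (sact u v w p).1 (sact u v w p).2 ≤
      max (max (salt u v false w.length p).1 (salt u v false w.length p).2)
          (max (salt u v true w.length p).1 (salt u v true w.length p).2) ∧
    (sact u v w p).1 + (sact u v w p).2 ≤
      max ((salt u v false w.length p).1 + (salt u v false w.length p).2)
          ((salt u v true w.length p).1 + (salt u v true w.length p).2) := by
  induction w using List.reverseRecOn generalizing p with
  | nil => exact ⟨le_max_left _ _, le_max_left _ _⟩
  | append_singleton t b ih =>
      have hact : sact u v (t ++ [b]) p = sact u v t (sstep u v b p) := by
        simp [sact, List.foldr_append]
      have hlen : (t ++ [b]).length = t.length + 1 := by simp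
      rw [hact, hlen]
      obtain ⟨ihm, ihs⟩ := ih (sstep u v b p)
      cases b with
      | false =>
          have hq : u * (sstep u v false p).1 ≤ (sstep u v false p).2 := by
            show u * p.1 ≤ u * p.1 + p.2; omega
          obtain ⟨lam, las⟩ := sLA u v hv huv t.length (sstep u v false p) hq
          rw [salt_false_succ]
          constructor
          · exact ihm.trans (le_trans (max_le lam le_rfl) (le_max_left _ _))
          · exact ihs.trans (le_trans (max_le las le_rfl) (le_max_left _ _))
      | true =>
          have hq : v * (sstep u v true p).2 ≤ (sstep u v true p).1 := by
            show v * p.2 ≤ p.1 + v * p.2; omega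
          obtain ⟨lbm, lbs⟩ := sLB u v hv huv t.length (sstep u v true p) hq
          rw [salt_true_succ]
          constructor
          · exact ihm.trans (le_trans (max_le le_rfl lbm) (le_max_right _ _))
          · exact ihs.trans (le_trans (max_le le_rfl lbs) (le_max_right _ _))

/-! ### Identification of the alternating trajectories -/

lemma ag_shift (u v a c : ℕ) : ∀ n : ℕ,
    ag u v (a + v * (u * a + c)) (u * a + c) n = ag u v a c (n + 1) := by
  intro n
  induction n with
  | zero =>
      simp only [ag, Prod.mk.injEq, true_and]
      ring
  | succ n ihn =>
      show (_, _) = (_, _)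
      rw [ag]
      rw [ihn]
      rfl

lemma salt_false_odd (u v : ℕ) : ∀ n : ℕ, ∀ p : ℕ × ℕ,
    salt u v false (2 * n + 1) p = ag u v p.1 p.2 n := by
  intro n
  induction n with
  | zero => intro p; rfl
  | succ n ihn =>
      intro p
      have e1 : 2 * (n + 1) + 1 = (2 * n + 1) + 1 + 1 := by ring
      rw [e1, salt_false_succ, salt_true_succ]
      have e2 : sstep u v true (sstep u v false p)
          = (p.1 + v * (u * p.1 + p.2), u * p.1 + p.2) := rfl
      rw [e2, ihn]
      exact ag_shift u v p.1 p.2 n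

lemma salt_true_one (u v : ℕ) (p : ℕ × ℕ) :
    salt u v true 1 p = (p.1 + v * p.2, p.2) := rfl

lemma salt_false_even (u v : ℕ) : ∀ n : ℕ, ∀ r : ℕ × ℕ,
    salt u v false (2 * n + 2) r = ((ag u v r.1 r.2 (n + 1)).1, (ag u v r.1 r.2 n).2) := by
  intro n
  induction n with
  | zero =>
      intro r
      show (r.1 + v * (u * r.1 + r.2), u * r.1 + r.2) = _
      simp [ag]
  | succ n ihn =>
      intro r
      have e1 : 2 * (n + 1) + 2 = (2 * n + 2) + 1 + 1 := by ring
      rw [e1, salt_false_succ, salt_true_succ]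
      have e2 : sstep u v true (sstep u v false r)
          = (r.1 + v * (u * r.1 + r.2), u * r.1 + r.2) := rfl
      rw [e2, ihn]
      rw [ag_shift u v r.1 r.2 n, ag_shift u v r.1 r.2 (n + 1)]

lemma salt_true_odd (u v : ℕ) (n : ℕ) (p : ℕ × ℕ) :
    salt u v true (2 * (n + 1) + 1) p
      = ((ag u v (p.1 + v * p.2) p.2 (n + 1)).1, (ag u v (p.1 + v * p.2) p.2 n).2) := by
  have e1 : 2 * (n + 1) + 1 = (2 * n + 2) + 1 := by ring
  rw [e1, salt_true_succ]
  have e2 : sstep u v true p = (p.1 + v * p.2, p.2) := rfl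
  rw [e2, salt_false_even]

/-- Linearity of `ag` in the initial data. -/
lemma ag_lin (u v a c : ℕ) : ∀ n : ℕ,
    (ag u v (a + v * c) c n).1 = (ag u v a c n).1 + (ag u v (v * c) 0 n).1 ∧
    (ag u v (a + v * c) c n).2 = (ag u v a c n).2 + (ag u v (v * c) 0 n).2 := by
  intro n
  induction n with
  | zero => exact ⟨rfl, by show u * (a + v * c) + c = (u * a + c) + (u * (v * c) + 0); ring⟩
  | succ n ihn =>
      obtain ⟨i1, i2⟩ := ihn
      constructor
      · show (ag u v (a + v * c) c n).1 + v * (ag u v (a + v * c) c n).2 = _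
        rw [i1, i2]
        show _ = ((ag u v a c n).1 + v * (ag u v a c n).2)
          + ((ag u v (v * c) 0 n).1 + v * (ag u v (v * c) 0 n).2)
        ring
      · show u * (ag u v (a + v * c) c n).1 + (1 + u * v) * (ag u v (a + v * c) c n).2 = _
        rw [i1, i2]
        show _ = (u * (ag u v a c n).1 + (1 + u * v) * (ag u v a c n).2)
          + (u * (ag u v (v * c) 0 n).1 + (1 + u * v) * (ag u v (v * c) 0 n).2)
        ring

/-- The big invariant comparing `(A,G) = ag a c` with the perturbation `(d,e) = ag (vc) 0`. -/
lemma sinv (u v a c : ℕ) (hv : 2 ≤ v) (huv : v ≤ u) (hca : c ≤ a) : ∀ k : ℕ,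
    (ag u v a c k).1 ≤ (ag u v a c k).2 ∧
    u * (ag u v a c k).1 ≤ (ag u v a c k).2 ∧
    u * (ag u v (v * c) 0 k).1 ≤ (ag u v (v * c) 0 k).2 ∧
    (ag u v a c k).1 + (ag u v (v * c) 0 k).1 ≤ (ag u v a c k).2 ∧
    (ag u v (v * c) 0 k).1 ≤ v * (ag u v a c k).1 ∧
    (ag u v (v * c) 0 k).2 ≤ v * (ag u v a c k).2 ∧
    (ag u v (v * c) 0 k).1 + (v + 1) * (ag u v (v * c) 0 k).2
      ≤ u * (ag u v a c k).1 + u * v * (ag u v a c k).2 ∧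
    v * (ag u v (v * c) 0 k).2 + v * (ag u v a c k).2
      ≤ u * (ag u v a c k).1 + u * v * (ag u v a c k).2 ∧
    u * (ag u v (v * c) 0 k).1 + v * (ag u v (v * c) 0 k).2 ≤ u * v * (ag u v a c k).2 := by
  have h2u : 2 ≤ u := hv.trans huv
  have hvcua : v * c ≤ u * a := Nat.mul_le_mul huv hca
  intro k
  induction k with
  | zero =>
      simp only [ag]
      have j5 : a + v * c ≤ u * a + c := by
        nlinarith [hvcua, Nat.mul_le_mul_right a huv, Nat.mul_le_mul_left v hca,
          Nat.mul_le_mul_right a hv, Nat.mul_le_mul_right c hv, hca]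
      refine ⟨by nlinarith [Nat.mul_le_mul_right a h2u], by omega, by omega, j5,
        Nat.mul_le_mul_left v hca, ?_, ?_, ?_, ?_⟩
      · nlinarith [Nat.mul_le_mul_left (u * v) hca]
      · nlinarith [hvcua, Nat.mul_le_mul_left (u * v) hvcua]
      · nlinarith [hvcua, Nat.mul_le_mul_left (u * v) j5]
      · nlinarith [Nat.mul_le_mul_left (u * v) hvcua]
  | succ k ihk =>
      obtain ⟨h1, h2, h4, h5, h6, h7, h8, h9, h10⟩ := ihk
      simp only [ag]
      set A := (ag u v a c k).1
      set G := (ag u v a c k).2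
      set d := (ag u v (v * c) 0 k).1
      set e := (ag u v (v * c) 0 k).2
      refine ⟨?_, ?_, ?_, ?_, ?_, ?_, ?_, ?_, ?_⟩
      · nlinarith [Nat.mul_le_mul_right A h2u, Nat.mul_le_mul_right (v * G) h2u]
      · nlinarith [Nat.zero_le G]
      · nlinarith [Nat.zero_le e]
      · nlinarith [h5, h9]
      · nlinarith [h6, Nat.mul_le_mul_left v h7]
      · nlinarith [Nat.mul_le_mul_left u h6, Nat.mul_le_mul_left (1 + u * v) h7]
      · nlinarith [Nat.mul_le_mul_left (1 + u * v) h8, h10]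
      · nlinarith [Nat.mul_le_mul_left (u * v) h5, Nat.mul_le_mul_left (1 + u * v) h9]
      · nlinarith [Nat.mul_le_mul_left (u * v) h8, h10]

/-- The first column of `wordProd u v w * M` is the action of `w` on the first column. -/
lemma scol (u v : ℕ) (M : Matrix (Fin 2) (Fin 2) ℕ) : ∀ w : List Bool,
    (wordProd u v w * M) 0 0 = (sact u v w (M 0 0, M 1 0)).1 ∧
    (wordProd u v w * M) 1 0 = (sact u v w (M 0 0, M 1 0)).2 := by
  intro w
  induction w with
  | nil => simp [wordProd, sact]
  | cons b t ih =>
      obtain ⟨i1, i2⟩ := ih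
      have hw : wordProd u v (b :: t) * M
          = (if b then Rm v else Lm u) * (wordProd u v t * M) := by
        simp [wordProd, Matrix.mul_assoc]
      have hs : sact u v (b :: t) (M 0 0, M 1 0)
          = sstep u v b (sact u v t (M 0 0, M 1 0)) := rfl
      cases b with
      | false =>
          rw [hw, hs]
          constructor
          · show (Lm u * (wordProd u v t * M)) 0 0 = (sact u v t (M 0 0, M 1 0)).1
            rw [← i1]
            simp [Lm, Matrix.mul_apply, Fin.sum_univ_two]
          · show (Lm u * (wordProd u v t * M)) 1 0
              = u * (sact u v t (M 0 0, M 1 0)).1 + (sact u v t (M 0 0, M 1 0)).2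
            rw [← i1, ← i2]
            simp [Lm, Matrix.mul_apply, Fin.sum_univ_two]
      | true =>
          rw [hw, hs]
          constructor
          · show (Rm v * (wordProd u v t * M)) 0 0
              = (sact u v t (M 0 0, M 1 0)).1 + v * (sact u v t (M 0 0, M 1 0)).2
            rw [← i1, ← i2]
            simp [Rm, Matrix.mul_apply, Fin.sum_univ_two]
          · show (Rm v * (wordProd u v t * M)) 1 0 = (sact u v t (M 0 0, M 1 0)).2
            rw [← i2]
            simp [Rm, Matrix.mul_apply, Fin.sum_univ_two]

theorem stmt8 (u v : ℕ) (hv : 2 ≤ v) (huv : v ≤ u)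
    (M : Matrix (Fin 2) (Fin 2) ℕ) (hM : detOne M) (hac : M 1 0 ≤ M 0 0)
    (n : ℕ) (w : List Bool) (hw : w.length = 2 * n + 1)
    (M' : Matrix (Fin 2) (Fin 2) ℕ) (hM' : M' = wordProd u v w * M) :
    max (M' 0 0) (M' 1 0) ≤ (ag u v (M 0 0) (M 1 0) n).2 ∧
    M' 0 0 + M' 1 0 ≤ (ag u v (M 0 0) (M 1 0) n).1 + (ag u v (M 0 0) (M 1 0) n).2 := by
  have h2u : 2 ≤ u := hv.trans huv
  set a := M 0 0 with ha
  set c := M 1 0 with hc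
  obtain ⟨c1, c2⟩ := scol u v M w
  have hb := sbound u v hv huv w (a, c)
  rw [hw] at hb
  rw [salt_false_odd u v n (a, c)] at hb
  -- bounds for the L-alternating word
  have hinv := sinv u v a c hv huv hac
  have hAG : (ag u v a c n).1 ≤ (ag u v a c n).2 := (hinv n).1
  -- bounds for the R-alternating word
  have hT : max (salt u v true (2 * n + 1) (a, c)).1 (salt u v true (2 * n + 1) (a, c)).2
        ≤ (ag u v a c n).2 ∧
      (salt u v true (2 * n + 1) (a, c)).1 + (salt u v true (2 * n + 1) (a, c)).2
        ≤ (ag u v a c n).1 + (ag u v a c n).2 := by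
    cases n with
    | zero =>
        rw [show 2 * 0 + 1 = 1 from rfl, salt_true_one]
        have hvcua : v * c ≤ u * a := Nat.mul_le_mul huv hac
        constructor
        · apply max_le
          · show a + v * c ≤ (ag u v a c 0).2
            show a + v * c ≤ u * a + c
            nlinarith [hvcua, Nat.mul_le_mul_right a huv, Nat.mul_le_mul_left v hac,
              Nat.mul_le_mul_right a hv, Nat.mul_le_mul_right c hv, hac]
          · show c ≤ (ag u v a c 0).2
            show c ≤ u * a + c
            omega
        · show a + v * c + c ≤ (ag u v a c 0).1 + (ag u v a c 0).2
          show a + v * c + c ≤ a + (u * a + c)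
          omega
    | succ m =>
        rw [salt_true_odd u v m (a, c)]
        obtain ⟨g1, g2, g4, g5, g6, g7, g8, g9, g10⟩ := hinv m
        obtain ⟨G1, G2, G4, G5, G6, G7, G8, G9, G10⟩ := hinv (m + 1)
        obtain ⟨l1, l2⟩ := ag_lin u v a c (m + 1)
        obtain ⟨l1', l2'⟩ := ag_lin u v a c m
        have hupos : 0 < u := by omega
        constructor
        · apply max_le
          · rw [l1]
            exact G5
          · rw [l2']
            have hvu : v * (ag u v a c m).2 ≤ u * v * (ag u v a c m).2 := by
              rw [mul_assoc]
              exact Nat.le_mul_of_pos_left _ hupos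
            have : (ag u v a c m).2 + (ag u v (v * c) 0 m).2
                ≤ u * (ag u v a c m).1 + (1 + u * v) * (ag u v a c m).2 := by
              have expand : u * (ag u v a c m).1 + (1 + u * v) * (ag u v a c m).2
                  = u * (ag u v a c m).1 + (ag u v a c m).2 + u * v * (ag u v a c m).2 := by
                ring
              rw [expand]
              have := g7.trans hvu
              omega
            calc (ag u v a c m).2 + (ag u v (v * c) 0 m).2
                ≤ u * (ag u v a c m).1 + (1 + u * v) * (ag u v a c m).2 := this
              _ = (ag u v a c (m + 1)).2 := rfl
        · rw [l1, l2']
          have key : (ag u v (v * c) 0 (m + 1)).1 + ((ag u v a c m).2 + (ag u v (v * c) 0 m).2)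
              ≤ (ag u v a c (m + 1)).2 := by
            show (ag u v (v * c) 0 m).1 + v * (ag u v (v * c) 0 m).2
                + ((ag u v a c m).2 + (ag u v (v * c) 0 m).2)
                ≤ u * (ag u v a c m).1 + (1 + u * v) * (ag u v a c m).2
            have expand : u * (ag u v a c m).1 + (1 + u * v) * (ag u v a c m).2
                = u * (ag u v a c m).1 + (ag u v a c m).2 + u * v * (ag u v a c m).2 := by
              ring
            have expand2 : (v + 1) * (ag u v (v * c) 0 m).2
                = v * (ag u v (v * c) 0 m).2 + (ag u v (v * c) 0 m).2 := by ring
            rw [expand]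
            rw [expand2] at g8
            omega
          omega
  -- put everything together
  obtain ⟨hbm, hbs⟩ := hb
  constructor
  · rw [hM', c1, c2]
    refine hbm.trans (max_le ?_ hT.1)
    exact max_le hAG le_rfl
  · rw [hM', c1, c2]
    refine hbs.trans (max_le le_rfl hT.2)
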